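/- Let p be a prime, k ≥ 2 with p > k, and let A ⊆ ℤ/pℤ \ {0} with |A| = k and ∑_{z∈A} z ≠ 0. If there exists an index j ∈ {1,…,k} such that the coefficient c_{k,j} of the monomial x₁^{k−1}⋯x_{j−1}^{k−1}·x_j^{k−2}·x_{j+1}^{k−1}⋯x_k^{k−1} in F_k = g_k/(x₁+⋯+x_k) is nonzero modulo p, then there is an ordering of the elements of A whose partial sums are all nonzero and pairwise distinct. -/

import Mathlib

open MvPolynomial

/-- `g_k = ∏_{1 ≤ i < j ≤ k} (x_j - x_i)(x_i + ⋯ + x_j)`, with variables indexed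
by `Fin k` (so `x₁` corresponds to index `0`, …, `x_k` to index `k-1`). -/
noncomputable def gPoly (R : Type*) [CommRing R] (k : ℕ) : MvPolynomial (Fin k) R :=
  ∏ j : Fin k, ∏ i ∈ Finset.univ.filter (· < j),
    ((X j - X i) * ∑ r ∈ Finset.Icc i j, X r)

section Aux
open Polynomial Finset
variable {K : Type*} [Field K] [DecidableEq K]
variable {K : Type*} [Field K] [DecidableEq K]

lemma lagrange_pow_sum (A : Finset K) {e : ℕ} (he : e < A.card) :
    ∑ b ∈ A, b ^ e * (∏ c ∈ A.erase b, (b - c))⁻¹ =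
      if e = A.card - 1 then 1 else 0 := by
  have hinj : Set.InjOn id (A : Set K) := fun x _ y _ h => h
  have h1 : (Polynomial.X ^ e : K[X]) = Lagrange.interpolate A id (fun b => b ^ e) := by
    have h2 := Lagrange.eq_interpolate (v := id) (s := A) (f := Polynomial.X ^ e) hinj
      (by simpa [Polynomial.degree_X_pow] using (Nat.cast_lt (α := WithBot ℕ)).mpr he)
    simpa using h2
  have hbasis : ∀ b ∈ A, (Lagrange.basis A id b).coeff (A.card - 1)
      = (∏ c ∈ A.erase b, (b - c))⁻¹ := by
    intro b hb
    have hP : (Lagrange.basis A id b) =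
        Polynomial.C (∏ c ∈ A.erase b, (b - c)⁻¹) *
          ∏ c ∈ A.erase b, (Polynomial.X - Polynomial.C c) := by
      rw [Lagrange.basis]
      simp only [Lagrange.basisDivisor, id_eq]
      rw [Finset.prod_mul_distrib, map_prod]
    have hmonic : (∏ c ∈ A.erase b, (Polynomial.X - Polynomial.C c)).Monic :=
      Polynomial.monic_prod_of_monic _ _ fun c _ => Polynomial.monic_X_sub_C c
    have hdeg : (∏ c ∈ A.erase b, (Polynomial.X - Polynomial.C c)).natDegree = A.card - 1 := by
      rw [Polynomial.natDegree_prod _ _ fun c _ => Polynomial.X_sub_C_ne_zero c]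
      simp [Finset.card_erase_of_mem hb]
    rw [hP, Polynomial.coeff_C_mul, ← hdeg, hmonic.coeff_natDegree, mul_one,
      Finset.prod_inv_distrib]
  have h3 := congrArg (fun q : K[X] => q.coeff (A.card - 1)) h1
  simp only [Polynomial.coeff_X_pow, Lagrange.interpolate_apply, Polynomial.finset_sum_coeff,
    Polynomial.coeff_C_mul] at h3
  rw [Finset.sum_congr rfl (fun b hb => by rw [hbasis b hb])] at h3
  rw [← h3]
  by_cases h : e = A.card - 1 <;> simp [h, eq_comm]
end Aux

section Aux2
open MvPolynomial Finset
variable {K : Type*} [Field K] [DecidableEq K]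
lemma cn_exists {n : ℕ} (Asets : Fin n → Finset K) (hA : ∀ i, (Asets i).Nonempty)
    (f : MvPolynomial (Fin n) K)
    (hdeg : ∀ s ∈ f.support, ∑ i, s i ≤ ∑ i, ((Asets i).card - 1))
    (hcoeff : f.coeff (∑ i, Finsupp.single i ((Asets i).card - 1)) ≠ 0) :
    ∃ a : Fin n → K, (∀ i, a i ∈ Asets i) ∧ eval a f ≠ 0 := by
  set t : Fin n → ℕ := fun i => (Asets i).card - 1 with ht
  set T : (Fin n) →₀ ℕ := ∑ i, Finsupp.single i (t i) with hT
  have hTapp : ∀ i, T i = t i := by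
    intro i
    rw [hT, Finsupp.finset_sum_apply]
    simp [Finsupp.single_apply]
  by_contra hcon
  push_neg at hcon
  have hval : ∀ a ∈ Fintype.piFinset Asets, eval a f = 0 := by
    intro a ha
    exact hcon a (fun i => (Fintype.mem_piFinset.mp ha) i)
  have key : ∑ a ∈ Fintype.piFinset Asets,
      eval a f * ∏ i, (∏ c ∈ (Asets i).erase (a i), (a i - c))⁻¹ = f.coeff T := by
    have heval : ∀ a : Fin n → K,
        eval a f = ∑ s ∈ f.support, f.coeff s * ∏ i, (a i) ^ (s i) := fun a => eval_eq' a f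
    calc ∑ a ∈ Fintype.piFinset Asets,
        eval a f * ∏ i, (∏ c ∈ (Asets i).erase (a i), (a i - c))⁻¹
        = ∑ s ∈ f.support, f.coeff s * ∑ a ∈ Fintype.piFinset Asets,
            ∏ i, ((a i) ^ (s i) * (∏ c ∈ (Asets i).erase (a i), (a i - c))⁻¹) := by
          simp only [heval, Finset.sum_mul]
          rw [Finset.sum_comm]
          refine Finset.sum_congr rfl fun s _ => ?_
          rw [Finset.mul_sum]
          refine Finset.sum_congr rfl fun a _ => ?_
          rw [mul_assoc, ← Finset.prod_mul_distrib]
      _ = ∑ s ∈ f.support, f.coeff s *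
            ∏ i, ∑ b ∈ Asets i, b ^ (s i) * (∏ c ∈ (Asets i).erase b, (b - c))⁻¹ := by
          refine Finset.sum_congr rfl fun s _ => ?_
          rw [Finset.prod_univ_sum]
      _ = ∑ s ∈ f.support, f.coeff s * (if s = T then 1 else 0) := by
          refine Finset.sum_congr rfl fun s hs => ?_
          congr 1
          by_cases hsT : s = T
          · subst hsT
            rw [if_pos rfl]
            refine Finset.prod_eq_one fun i _ => ?_
            rw [hTapp i, lagrange_pow_sum _ (Nat.sub_lt (hA i).card_pos one_pos)]
            exact if_pos rfl
          · rw [if_neg hsT]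
            have hex : ∃ i, s i < t i := by
              by_contra hall
              push_neg at hall
              have hle : ∀ i ∈ univ, t i ≤ s i := fun i _ => hall i
              have h1 : ∑ i, t i ≤ ∑ i, s i := Finset.sum_le_sum hle
              have h2 : ∑ i, s i ≤ ∑ i, t i := hdeg s hs
              have heq := (Finset.sum_eq_sum_iff_of_le hle).mp (le_antisymm h2 h1).symm
              exact hsT (Finsupp.ext fun i => ((heq i (mem_univ i)).symm ▸ (hTapp i).symm))
            obtain ⟨i0, hi0⟩ := hex
            refine Finset.prod_eq_zero (mem_univ i0) ?_
            rw [lagrange_pow_sum _ (lt_of_lt_of_le hi0 (Nat.sub_le _ _))]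
            exact if_neg (ne_of_lt hi0)
      _ = f.coeff T := by
          simp only [mul_ite, mul_one, mul_zero]
          rw [Finset.sum_ite_eq' f.support T (fun s => f.coeff s)]
          by_cases hmem : T ∈ f.support
          · rw [if_pos hmem]
          · rw [if_neg hmem]
            exact (MvPolynomial.notMem_support_iff.mp hmem).symm
  rw [Finset.sum_congr rfl (fun a ha => by rw [hval a ha, zero_mul])] at key
  simp only [Finset.sum_const_zero] at key
  exact hcoeff key.symm


lemma prime_X_sub_X {k : ℕ} {i j : Fin k} (h : i ≠ j) :
    Prime (X i - X j : MvPolynomial (Fin k) ℤ) := by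
  let e : Fin k ≃ Option {x : Fin k // x ≠ i} := (Equiv.optionSubtypeNe i).symm
  let E := (renameEquiv ℤ e).trans (optionEquivLeft ℤ {x : Fin k // x ≠ i})
  rw [← MulEquiv.prime_iff E.toRingEquiv.toMulEquiv]
  have himg : E.toRingEquiv.toMulEquiv (X i - X j)
      = Polynomial.X - Polynomial.C (X ⟨j, h.symm⟩) := by
    show E (X i - X j) = _
    simp only [map_sub, E, AlgEquiv.trans_apply, renameEquiv_apply, rename_X]
    have h1 : e i = none := Equiv.optionSubtypeNe_symm_self i
    have h2 : e j = some ⟨j, h.symm⟩ := Equiv.optionSubtypeNe_symm_of_ne h.symm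
    rw [h1, h2, optionEquivLeft_X_none, optionEquivLeft_X_some]
  rw [himg]
  exact Polynomial.prime_X_sub_C _

lemma homog_support_degree {σ R : Type*} [CommRing R] [IsDomain R]
    {f s g : MvPolynomial σ R} {m n : ℕ}
    (hs : s.IsHomogeneous m) (hs0 : s ≠ 0) (hg : g.IsHomogeneous n)
    (hfs : f * s = g) {d : σ →₀ ℕ} (hd : d ∈ f.support) : d.degree + m = n := by
  have hkey : ∀ d' : ℕ, homogeneousComponent d' f ≠ 0 → d' + m = n := by
    intro d' hne
    by_contra hnm
    have hd'le : d' ≤ f.totalDegree := by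
      by_contra hgt
      exact hne (homogeneousComponent_eq_zero d' f (lt_of_not_ge hgt))
    have hgcomp : homogeneousComponent (d' + m) g = 0 := by
      rw [homogeneousComponent_of_mem ((mem_homogeneousSubmodule _ _).mpr hg)]
      exact if_neg hnm
    have hexp : f * s = (∑ i ∈ Finset.range (f.totalDegree + 1),
        homogeneousComponent i f) * s := by rw [sum_homogeneousComponent]
    have : homogeneousComponent (d' + m) (f * s) = homogeneousComponent d' f * s := by
      rw [hexp, Finset.sum_mul, map_sum]
      have hterm : ∀ i ∈ Finset.range (f.totalDegree + 1),
          homogeneousComponent (d' + m) (homogeneousComponent i f * s)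
            = if i = d' then homogeneousComponent i f * s else 0 := by
        intro i _
        rw [homogeneousComponent_of_mem ((mem_homogeneousSubmodule _ _).mpr
          ((homogeneousComponent_isHomogeneous i f).mul hs))]
        by_cases hid : i = d'
        · simp [hid]
        · rw [if_neg (by omega), if_neg hid]
      rw [Finset.sum_congr rfl hterm, Finset.sum_ite_eq' _ d',
        if_pos (Finset.mem_range.mpr (by omega))]
    rw [hfs, hgcomp] at this
    exact hne ((mul_eq_zero.mp this.symm).resolve_right hs0)
  have hdeg : d.degree ≤ f.totalDegree := by
    have := MvPolynomial.le_totalDegree hd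
    rwa [Finsupp.sum, ← Finsupp.degree_apply] at this
  by_contra hnm
  have hcomp0 : homogeneousComponent d.degree f = 0 := by
    by_contra hne
    exact hnm (hkey _ hne)
  have := coeff_homogeneousComponent (n := d.degree) d (φ := f)
  rw [hcomp0, if_pos rfl] at this
  simp only [coeff_zero] at this
  exact (MvPolynomial.mem_support_iff.mp hd) this.symm

lemma gPoly_isHomogeneous (k : ℕ) : (gPoly ℤ k).IsHomogeneous (k * (k - 1)) := by
  have h1 : (gPoly ℤ k).IsHomogeneous (∑ j : Fin k, ∑ _i ∈ univ.filter (· < j), 2) := by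
    apply IsHomogeneous.prod
    intro j _
    apply IsHomogeneous.prod
    intro i _
    exact ((isHomogeneous_X _ j).sub (isHomogeneous_X _ i)).mul
      (IsHomogeneous.sum _ _ _ fun r _ => isHomogeneous_X _ r)
  have h2 : (∑ j : Fin k, ∑ _i ∈ univ.filter (· < j), 2) = k * (k - 1) := by
    have hfil : ∀ j : Fin k, univ.filter (· < j) = Finset.Iio j := by
      intro j; ext r; simp
    calc (∑ j : Fin k, ∑ _i ∈ univ.filter (· < j), 2)
        = ∑ j : Fin k, (j : ℕ) * 2 := by
          refine Finset.sum_congr rfl fun j _ => ?_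
          rw [Finset.sum_const, hfil, Fin.card_Iio, smul_eq_mul]
      _ = (∑ j ∈ Finset.range k, j) * 2 := by
          rw [← Finset.sum_mul, Fin.sum_univ_eq_sum_range (fun x => x) k]
      _ = k * (k - 1) := Finset.sum_range_id_mul_two k
  rwa [h2] at h1

lemma dvd_gPoly {k : ℕ} {i j : Fin k} (h : i < j) :
    (X j - X i : MvPolynomial (Fin k) ℤ) ∣ gPoly ℤ k := by
  refine dvd_trans ?_ (Finset.dvd_prod_of_mem _ (Finset.mem_univ j))
  refine dvd_trans ?_ (Finset.dvd_prod_of_mem _ (by simp [h] :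
    i ∈ Finset.univ.filter (· < j)))
  exact dvd_mul_right _ _

lemma map_gPoly (p k : ℕ) :
    MvPolynomial.map (Int.castRingHom (ZMod p)) (gPoly ℤ k) = gPoly (ZMod p) k := by
  simp only [gPoly, map_prod, map_mul, map_sub, map_sum, MvPolynomial.map_X]

end Aux2


/-- An ordering of the finite set `A` (as a list) whose partial sums are all nonzero
and pairwise distinct. -/
def IsAlspachOrdering {G : Type*} [AddCommGroup G] (A : Finset G) (l : List G) : Prop :=
  l.Nodup ∧ (∀ x, x ∈ l ↔ x ∈ A) ∧
    (∀ i : ℕ, 1 ≤ i → i ≤ l.length → (l.take i).sum ≠ 0) ∧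
    (∀ i j : ℕ, 1 ≤ i → i < j → j ≤ l.length → (l.take i).sum ≠ (l.take j).sum)

theorem stmt13 (p k : ℕ) (hp : p.Prime) (hk : 2 ≤ k) (hpk : k < p)
    (A : Finset (ZMod p)) (hA0 : (0 : ZMod p) ∉ A) (hcard : A.card = k)
    (hsum : ∑ z ∈ A, z ≠ 0)
    (F : MvPolynomial (Fin k) ℤ) (hF : F * (∑ i : Fin k, X i) = gPoly ℤ k)
    (j : Fin k)
    (hc : ¬ ((p : ℤ) ∣
      F.coeff (∑ i : Fin k, Finsupp.single i (if i = j then k - 2 else k - 1)))) :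
    ∃ l : List (ZMod p), IsAlspachOrdering A l := by
  classical
  haveI : Fact p.Prime := ⟨hp⟩
  -- the linear factor
  have hS1 : (∑ i : Fin k, X i : MvPolynomial (Fin k) ℤ).IsHomogeneous 1 :=
    IsHomogeneous.sum _ _ _ fun i _ => isHomogeneous_X _ i
  have hS0 : (∑ i : Fin k, X i : MvPolynomial (Fin k) ℤ) ≠ 0 := by
    intro h0
    have h1 := congrArg (eval fun _ : Fin k => (1 : ℤ)) h0
    simp [Finset.card_univ] at h1
    omega
  have hFsupp : ∀ d ∈ F.support, d.degree = k * (k - 1) - 1 := by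
    intro d hd
    have h1 := homog_support_degree hS1 hS0 (gPoly_isHomogeneous k) hF hd
    omega
  -- divisibility of F by differences of variables
  have hdvdF : ∀ i1 i2 : Fin k, i1 ≠ i2 →
      (X i1 - X i2 : MvPolynomial (Fin k) ℤ) ∣ F := by
    intro i1 i2 hne
    have hdg : (X i1 - X i2 : MvPolynomial (Fin k) ℤ) ∣ gPoly ℤ k := by
      rcases lt_or_gt_of_ne hne with hlt | hgt
      · rw [show (X i1 - X i2 : MvPolynomial (Fin k) ℤ) = -(X i2 - X i1) by ring, neg_dvd]
        exact dvd_gPoly hlt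
      · exact dvd_gPoly hgt
    rcases (prime_X_sub_X hne).2.2 F _ (hF ▸ hdg) with h | h
    · exact h
    · exfalso
      obtain ⟨q, hq⟩ := h
      have h1 := congrArg (eval fun _ : Fin k => (1 : ℤ)) hq
      simp [Finset.card_univ] at h1
      omega
  -- the grid sets
  obtain ⟨x0, hx0⟩ : A.Nonempty := Finset.card_pos.mp (by omega)
  set Asets : Fin k → Finset (ZMod p) := fun i => if i = j then A.erase x0 else A
    with hAsets
  have hAget : ∀ i, Asets i = if i = j then A.erase x0 else A := fun i => rfl
  have hAcard : ∀ i, (Asets i).card - 1 = if i = j then k - 2 else k - 1 := by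
    intro i
    rw [hAget]
    by_cases hij : i = j <;> simp [hij, Finset.card_erase_of_mem hx0, hcard] <;> omega
  have hAsub : ∀ i, Asets i ⊆ A := by
    intro i
    rw [hAget]
    by_cases hij : i = j <;> simp [hij, Finset.erase_subset]
  have hAne : ∀ i, (Asets i).Nonempty := by
    intro i
    rw [← Finset.card_pos, hAget]
    by_cases hij : i = j <;> simp [hij, Finset.card_erase_of_mem hx0, hcard] <;> omega
  set Fp : MvPolynomial (Fin k) (ZMod p) := MvPolynomial.map (Int.castRingHom (ZMod p)) F
    with hFp
  have hcoeffp : Fp.coeff (∑ i, Finsupp.single i ((Asets i).card - 1)) ≠ 0 := by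
    have hTeq : (∑ i : Fin k, Finsupp.single i ((Asets i).card - 1)) =
        ∑ i : Fin k, Finsupp.single i (if i = j then k - 2 else k - 1) :=
      Finset.sum_congr rfl fun i _ => by rw [hAcard i]
    rw [hTeq, hFp, coeff_map]
    intro h0
    exact hc ((ZMod.intCast_zmod_eq_zero_iff_dvd _ p).mp h0)
  have hsum_t : ∑ i : Fin k, ((Asets i).card - 1) = k * (k - 1) - 1 := by
    rw [Finset.sum_congr rfl fun i _ => hAcard i,
      ← Finset.add_sum_erase _ _ (Finset.mem_univ j), if_pos rfl,
      Finset.sum_congr rfl fun i hi => if_neg (Finset.ne_of_mem_erase hi),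
      Finset.sum_const, Finset.card_erase_of_mem (Finset.mem_univ j),
      Finset.card_univ, Fintype.card_fin, smul_eq_mul]
    obtain ⟨b, rfl⟩ : ∃ b, k = b + 2 := ⟨k - 2, by omega⟩
    have e1 : b + 2 - 1 = b + 1 := rfl
    have e2 : b + 2 - 2 = b := rfl
    rw [e1, e2]
    have e3 : (b + 1) * (b + 1) = b * b + 2 * b + 1 := by ring
    have e4 : (b + 2) * (b + 1) = b * b + 3 * b + 2 := by ring
    omega
  have hdegp : ∀ s ∈ Fp.support, ∑ i, s i ≤ ∑ i, ((Asets i).card - 1) := by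
    intro s hs
    have hsF : s ∈ F.support := by
      rw [MvPolynomial.mem_support_iff] at hs ⊢
      intro h0
      rw [hFp, coeff_map, h0] at hs
      simp at hs
    have h1 := hFsupp s hsF
    have h2 : ∑ i : Fin k, s i = s.degree := by
      rw [Finsupp.degree]
      exact (Finset.sum_subset (Finset.subset_univ _)
        fun x _ hx => Finsupp.notMem_support_iff.mp hx).symm
    rw [hsum_t]
    omega
  obtain ⟨a, haA, haF⟩ := cn_exists Asets hAne Fp hdegp hcoeffp
  have haA' : ∀ i, a i ∈ A := fun i => hAsub i (haA i)
  have hinj : Function.Injective a := by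
    intro i1 i2 h12
    by_contra hne
    obtain ⟨q, hq⟩ := hdvdF i1 i2 hne
    apply haF
    rw [hFp, hq]
    simp only [map_mul, map_sub, MvPolynomial.map_X, _root_.map_mul, map_sub, eval_X]
    rw [h12]
    ring
  have himg : Finset.image a Finset.univ = A := by
    apply Finset.eq_of_subset_of_card_le
    · intro x hx
      obtain ⟨i, _, rfl⟩ := Finset.mem_image.mp hx
      exact haA' i
    · rw [Finset.card_image_of_injective _ hinj, Finset.card_univ, Fintype.card_fin, hcard]
  have hsum_a : ∑ i : Fin k, a i ≠ 0 := by
    have h1 : ∑ z ∈ A, z = ∑ i : Fin k, a i := by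
      rw [← himg, Finset.sum_image fun x _ y _ h => hinj h]
    rwa [← h1]
  have hgp : eval a (gPoly (ZMod p) k) ≠ 0 := by
    have hmap : Fp * (∑ i : Fin k, X i) = gPoly (ZMod p) k := by
      rw [← map_gPoly p k, ← hF]
      simp [hFp]
    rw [← hmap, map_mul]
    apply mul_ne_zero haF
    simpa using hsum_a
  -- all segment sums are nonzero
  have hseg : ∀ u v : Fin k, u ≤ v → ∑ r ∈ Finset.Icc u v, a r ≠ 0 := by
    intro u v huv
    rcases eq_or_lt_of_le huv with rfl | hlt
    · rw [Finset.Icc_self, Finset.sum_singleton]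
      intro h0
      exact hA0 (h0 ▸ haA' u)
    · simp only [gPoly, map_prod] at hgp
      have h1 := Finset.prod_ne_zero_iff.mp hgp v (Finset.mem_univ v)
      have h2 := Finset.prod_ne_zero_iff.mp h1 u
        (Finset.mem_filter.mpr ⟨Finset.mem_univ u, hlt⟩)
      rw [map_mul, map_sum] at h2
      have h3 := (mul_ne_zero_iff.mp h2).2
      simpa using h3
  -- list and prefix sums
  refine ⟨List.ofFn a, List.nodup_ofFn.mpr hinj, ?_, ?_, ?_⟩
  · intro x
    rw [List.mem_ofFn, ← himg]
    simp [Set.mem_range, eq_comm]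
  · intro i hi1 hik
    rw [List.length_ofFn] at hik
    rw [List.sum_take_ofFn]
    have hfil : Finset.univ.filter (fun r : Fin k => (r : ℕ) < i) =
        Finset.Icc (⟨0, by omega⟩ : Fin k) ⟨i - 1, by omega⟩ := by
      ext r
      simp [Finset.mem_Icc, Fin.le_def]
      omega
    rw [hfil]
    exact hseg _ _ (by simp [Fin.le_def])
  · intro i1 i2 hi1 h12 hik
    rw [List.length_ofFn] at hik
    rw [List.sum_take_ofFn, List.sum_take_ofFn]
    intro heq
    have hsubset : Finset.univ.filter (fun r : Fin k => (r : ℕ) < i1) ⊆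
        Finset.univ.filter (fun r : Fin k => (r : ℕ) < i2) := by
      intro r hr
      simp only [Finset.mem_filter] at hr ⊢
      exact ⟨hr.1, by omega⟩
    have hsd := Finset.sum_sdiff (f := a) hsubset
    rw [← heq] at hsd
    have hzero : ∑ r ∈ (Finset.univ.filter (fun r : Fin k => (r : ℕ) < i2) \
        Finset.univ.filter (fun r : Fin k => (r : ℕ) < i1)), a r = 0 := by
      have := add_right_cancel (b := ∑ r ∈ Finset.univ.filter (fun r : Fin k => (r : ℕ) < i1), a r)
        (a := ∑ r ∈ (Finset.univ.filter (fun r : Fin k => (r : ℕ) < i2) \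
          Finset.univ.filter (fun r : Fin k => (r : ℕ) < i1)), a r) (c := 0)
      apply this
      rw [hsd, zero_add]
    have hfil : (Finset.univ.filter (fun r : Fin k => (r : ℕ) < i2) \
        Finset.univ.filter (fun r : Fin k => (r : ℕ) < i1)) =
        Finset.Icc (⟨i1, by omega⟩ : Fin k) ⟨i2 - 1, by omega⟩ := by
      ext r
      simp [Finset.mem_Icc, Fin.le_def]
      omega
    rw [hfil] at hzero
    exact hseg _ _ (by simp [Fin.le_def]; omega) hzero
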